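/- Let F be an infinite field and let R be an F-algebra with a regular grading by an abelian group H that satisfies condition (R1). Then R is verbally prime: for any two polynomials f(x_1,…,x_t) and g(x_{t+1},…,x_s) in disjoint sets of variables in the free associative algebra F⟨X⟩, if neither f nor g is an ordinary polynomial identity for R, then f·g is not an ordinary polynomial identity for R. -/

import Mathlib

section GradedDefs

variable {F : Type*} [Field F] {G : Type*} [Group G] {A : Type*} [Ring A] [Algebra F A]

/-- An internal algebra grading of `A` by the group `G`: the components are independent,
span `A`, and multiply according to the group operation. -/
structure IsAlgGrading [DecidableEq G] (𝒜 : G → Submodule F A) : Prop where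
  internal : DirectSum.IsInternal 𝒜
  mul_mem : ∀ {g h : G} {x y : A}, x ∈ 𝒜 g → y ∈ 𝒜 h → x * y ∈ 𝒜 (g * h)

/-- An admissible (graded) substitution: the variable `x_{i,g}` is replaced by an element
of the homogeneous component of degree `g`. -/
def GradedSubst (𝒜 : G → Submodule F A) (a : ℕ × G → A) : Prop := ∀ p : ℕ × G, a p ∈ 𝒜 p.2

/-- `f` is a graded polynomial identity. -/
def IsGradedIdentity (𝒜 : G → Submodule F A) (f : FreeAlgebra F (ℕ × G)) : Prop :=
  ∀ a : ℕ × G → A, GradedSubst 𝒜 a → FreeAlgebra.lift F a f = 0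

/-- `f` is a graded central polynomial. -/
def IsGradedCentral (𝒜 : G → Submodule F A) (f : FreeAlgebra F (ℕ × G)) : Prop :=
  ¬ IsGradedIdentity 𝒜 f ∧
    ∀ a : ℕ × G → A, GradedSubst 𝒜 a → FreeAlgebra.lift F a f ∈ Set.center A

/-- `f` only uses (graded) variables from the set `S`. -/
def UsesVars (S : Set (ℕ × G)) (f : FreeAlgebra F (ℕ × G)) : Prop :=
  f ∈ Algebra.adjoin F (FreeAlgebra.ι F '' S)

/-- The primeness property for graded central polynomials: if a product of two polynomials
in disjoint sets of variables is graded central, then both factors are graded central. -/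
def HasGradedPrimeness (𝒜 : G → Submodule F A) : Prop :=
  ∀ (S T : Set (ℕ × G)) (f g : FreeAlgebra F (ℕ × G)),
    Disjoint S T → UsesVars S f → UsesVars T g →
    IsGradedCentral 𝒜 (f * g) →
    IsGradedCentral 𝒜 f ∧ IsGradedCentral 𝒜 g

end GradedDefs

section Regular

variable {F : Type*} [Field F] {H : Type*} [CommGroup H] {R : Type*} [Ring R] [Algebra F R]

/-- A regular grading of `R` by an abelian group `H` with commutation function `β`:
it is a grading such that (P1) every tuple of degrees is realized by elements with
non-zero product and (P2) homogeneous elements commute up to the scalar given by `β`. -/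
structure IsRegularGrading [DecidableEq H] (ℛ : H → Submodule F R) (β : H → H → Fˣ) :
    Prop where
  internal : DirectSum.IsInternal ℛ
  mul_mem : ∀ {g h : H} {x y : R}, x ∈ ℛ g → y ∈ ℛ h → x * y ∈ ℛ (g * h)
  prod_ne_zero : ∀ (m : ℕ) (hs : Fin m → H), ∃ r : Fin m → R,
    (∀ i, r i ∈ ℛ (hs i)) ∧ (List.ofFn r).prod ≠ 0
  comm : ∀ {g h : H} {x y : R}, x ∈ ℛ g → y ∈ ℛ h → x * y = ((β g h : Fˣ) : F) • (y * x)

end Regular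

section CondR1

variable {F : Type*} [Field F] {H : Type*} [CommGroup H] {R : Type*} [Ring R] [Algebra F R]

/-- Condition (R1): for any two monomials in disjoint sets of variables that are not
`H`-graded identities for `R`, their product is not an `H`-graded identity for `R`. -/
def CondR1 (ℛ : H → Submodule F R) : Prop :=
  ∀ w₁ w₂ : List (ℕ × H), w₁.Disjoint w₂ →
    ¬ IsGradedIdentity ℛ ((w₁.map (FreeAlgebra.ι F)).prod) →
    ¬ IsGradedIdentity ℛ ((w₂.map (FreeAlgebra.ι F)).prod) →
    ¬ IsGradedIdentity ℛ ((w₁.map (FreeAlgebra.ι F)).prod * (w₂.map (FreeAlgebra.ι F)).prod)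

end CondR1

section Ordinary

variable (F : Type*) [Field F] (A : Type*) [Ring A] [Algebra F A]

/-- `f` is an ordinary polynomial identity for `A`. -/
def IsIdentity (f : FreeAlgebra F ℕ) : Prop := ∀ a : ℕ → A, FreeAlgebra.lift F a f = 0

/-- `f` is an ordinary central polynomial for `A`. -/
def IsCentral (f : FreeAlgebra F ℕ) : Prop :=
  ¬ IsIdentity F A f ∧ ∀ a : ℕ → A, FreeAlgebra.lift F a f ∈ Set.center A

/-- The primeness property for ordinary central polynomials: if a product of two
polynomials in disjoint sets of variables is central, then both factors are central. -/
def HasPrimeness : Prop :=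
  ∀ (S T : Set ℕ) (f g : FreeAlgebra F ℕ),
    Disjoint S T → f ∈ Algebra.adjoin F (FreeAlgebra.ι F '' S) →
    g ∈ Algebra.adjoin F (FreeAlgebra.ι F '' T) →
    IsCentral F A (f * g) → IsCentral F A f ∧ IsCentral F A g

end Ordinary


set_option linter.unusedSectionVars false
set_option maxHeartbeats 1000000


namespace VPaux

open AddMonoidAlgebra

variable {F : Type*} [Field F] {H : Type*} [CommGroup H] [DecidableEq H]
  {R : Type*} [Ring R] [Algebra F R]

private theorem liftNCRingHom_single {M S : Type*} [AddMonoid M] [Semiring S] (f : R →+* S)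
    (g : Multiplicative M →* S) (hc : ∀ x y, Commute (f x) (g y)) (a : M) (b : R) :
    AddMonoidAlgebra.liftNCRingHom f g hc (AddMonoidAlgebra.single a b)
      = f b * g (Multiplicative.ofAdd a) :=
  AddMonoidAlgebra.liftNC_single _ _ _ _

/-- Sum-of-coefficients algebra hom. -/
noncomputable def Tot (F : Type*) [Field F] (R : Type*) [Ring R] [Algebra F R]
    (M : Type*) [AddCommMonoid M] : AddMonoidAlgebra R M →ₐ[F] R :=
  { AddMonoidAlgebra.liftNCRingHom (RingHom.id R) (1 : Multiplicative M →* R)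
      (fun _ _ => by simp) with
    commutes' := fun c => by
      show AddMonoidAlgebra.liftNCRingHom (RingHom.id R) (1 : Multiplicative M →* R)
        (fun _ _ => by simp) (AddMonoidAlgebra.single 0 (algebraMap F R c)) = algebraMap F R c
      rw [liftNCRingHom_single]; simp }

@[simp] theorem Tot_single {M : Type*} [AddCommMonoid M] (m : M) (c : R) :
    Tot F R M (AddMonoidAlgebra.single m c) = c := by
  show AddMonoidAlgebra.liftNCRingHom (RingHom.id R) (1 : Multiplicative M →* R)
    (fun _ _ => by simp) (AddMonoidAlgebra.single m c) = c
  rw [liftNCRingHom_single]; simp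

private theorem single0mul {M : Type*} [AddCommMonoid M] (c : R) (m : M) (x : F) :
    Commute (AddMonoidAlgebra.single (0 : M) c) (AddMonoidAlgebra.single m (x • (1:R))) := by
  rw [Commute, SemiconjBy, AddMonoidAlgebra.single_mul_single,
    AddMonoidAlgebra.single_mul_single, zero_add, add_zero, mul_smul_comm, smul_mul_assoc,
    mul_one, one_mul]

/-- The monoid-hom part of the scaling map. -/
private noncomputable def scalG (lam : ℕ × H → F) :
    Multiplicative (Multiset (ℕ × H)) →* AddMonoidAlgebra R (Multiset (ℕ × H)) where
  toFun := fun m => AddMonoidAlgebra.single (Multiplicative.toAdd m)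
    (((Multiplicative.toAdd m).map lam).prod • (1 : R))
  map_one' := by simp [AddMonoidAlgebra.one_def]
  map_mul' := fun m₁ m₂ => by
    rw [AddMonoidAlgebra.single_mul_single]
    simp only [toAdd_mul, Multiset.map_add, Multiset.prod_add]
    rw [smul_mul_smul_comm, one_mul]

private theorem single_zero_eq (c : R) :
    (AddMonoidAlgebra.singleZeroRingHom : R →+* AddMonoidAlgebra R (Multiset (ℕ × H))) c
      = AddMonoidAlgebra.single 0 c := rfl

private theorem scal_comm (lam : ℕ × H → F) : ∀ (x : R) (y : Multiplicative (Multiset (ℕ × H))),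
    Commute (AddMonoidAlgebra.singleZeroRingHom x) (scalG (F := F) (R := R) lam y) :=
  fun c m => by rw [single_zero_eq]; exact single0mul _ _ _

/-- Coefficientwise scaling by monomials in `lam`. -/
noncomputable def Scal (lam : ℕ × H → F) :
    AddMonoidAlgebra R (Multiset (ℕ × H)) →ₐ[F] AddMonoidAlgebra R (Multiset (ℕ × H)) :=
  { toRingHom := AddMonoidAlgebra.liftNCRingHom (AddMonoidAlgebra.singleZeroRingHom)
      (scalG (R := R) lam) (scal_comm lam)
    commutes' := fun c => by
      show AddMonoidAlgebra.liftNCRingHom _ (scalG (R := R) lam) (scal_comm lam)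
        (AddMonoidAlgebra.single 0 (algebraMap F R c)) = _
      rw [liftNCRingHom_single, single_zero_eq]
      show AddMonoidAlgebra.single (0 : Multiset (ℕ × H)) (algebraMap F R c)
          * AddMonoidAlgebra.single 0 ((Multiset.map lam 0).prod • (1:R)) = _
      rw [AddMonoidAlgebra.single_mul_single]
      simp [AddMonoidAlgebra.coe_algebraMap] }

@[simp] theorem Scal_single (lam : ℕ × H → F) (m : Multiset (ℕ × H)) (c : R) :
    Scal (F := F) lam (AddMonoidAlgebra.single m c)
      = AddMonoidAlgebra.single m ((m.map lam).prod • c) := by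
  show AddMonoidAlgebra.liftNCRingHom _ (scalG (R := R) lam) (scal_comm lam)
    (AddMonoidAlgebra.single m c) = _
  rw [liftNCRingHom_single, single_zero_eq]
  show AddMonoidAlgebra.single (0 : Multiset (ℕ × H)) c
      * AddMonoidAlgebra.single m ((Multiset.map lam m).prod • (1:R)) = _
  rw [AddMonoidAlgebra.single_mul_single, zero_add, mul_smul_comm, mul_one]

end VPaux

section Part2

variable {F : Type*} [Field F] {H : Type*} [CommGroup H] [DecidableEq H]
  {R : Type*} [Ring R] [Algebra F R]

open VPaux

/-- The graded-expansion substitution into the `Multiset`-graded algebra. -/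
noncomputable def Asub (H₀ : Finset H) (r : ℕ × H → R) (i : ℕ) :
    AddMonoidAlgebra R (Multiset (ℕ × H)) :=
  ∑ h ∈ H₀, AddMonoidAlgebra.single ({(i, h)} : Multiset (ℕ × H)) (r (i, h))

theorem tot_lift (H₀ : Finset H) (r : ℕ × H → R) (a : ℕ → R)
    (ha : ∀ i, ∑ h ∈ H₀, r (i, h) = a i) (f : FreeAlgebra F ℕ) :
    Tot F R (Multiset (ℕ × H)) (FreeAlgebra.lift F (Asub H₀ r) f) = FreeAlgebra.lift F a f := by
  have : (Tot F R (Multiset (ℕ × H))).comp (FreeAlgebra.lift F (Asub H₀ r))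
      = FreeAlgebra.lift F a := by
    apply FreeAlgebra.hom_ext
    funext i
    simp [Asub, map_sum, ha i]
  exact DFunLike.congr_fun this f

theorem scal_lift (H₀ : Finset H) (r : ℕ × H → R) (lam : ℕ × H → F) (f : FreeAlgebra F ℕ) :
    Scal (F := F) lam (FreeAlgebra.lift F (Asub H₀ r) f)
      = FreeAlgebra.lift F (Asub H₀ (fun v => lam v • r v)) f := by
  have : (Scal (F := F) (R := R) lam).comp (FreeAlgebra.lift F (Asub H₀ r))
      = FreeAlgebra.lift F (Asub H₀ (fun v => lam v • r v)) := by
    apply FreeAlgebra.hom_ext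
    funext i
    simp [Asub, map_sum]
  exact DFunLike.congr_fun this f

theorem perm_scalar {ℛ : H → Submodule F R} {β : H → H → Fˣ}
    (hreg : IsRegularGrading ℛ β) {l₁ l₂ : List (ℕ × H)} (p : l₁.Perm l₂) :
    ∃ c : F, ∀ r : ℕ × H → R, GradedSubst ℛ r →
      (l₁.map r).prod = c • (l₂.map r).prod := by
  induction p with
  | nil => exact ⟨1, fun r _ => by simp⟩
  | cons x _ ih =>
    obtain ⟨c, hc⟩ := ih
    exact ⟨c, fun r hr => by
      simp only [List.map_cons, List.prod_cons, hc r hr, mul_smul_comm]⟩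
  | swap x y l =>
    refine ⟨((β y.2 x.2 : Fˣ) : F), fun r hr => ?_⟩
    simp only [List.map_cons, List.prod_cons, ← mul_assoc]
    rw [hreg.comm (hr y) (hr x), smul_mul_assoc]
  | trans _ _ ih₁ ih₂ =>
    obtain ⟨c₁, hc₁⟩ := ih₁
    obtain ⟨c₂, hc₂⟩ := ih₂
    exact ⟨c₂ * c₁, fun r hr => by rw [hc₁ r hr, hc₂ r hr, smul_smul, mul_comm c₁]⟩

end Part2

section KeyPart

variable {F : Type*} [Field F] {H : Type*} [CommGroup H] [DecidableEq H]
  {R : Type*} [Ring R] [Algebra F R]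

open VPaux

theorem toList_perm_append (d₁ d₂ : Multiset (ℕ × H)) :
    (d₁.toList ++ d₂.toList).Perm (d₁ + d₂).toList := by
  rw [← Multiset.coe_eq_coe]
  simp only [← Multiset.coe_add, Multiset.coe_toList]

/-- Key structure lemma: each multihomogeneous coefficient of a graded expansion is a fixed
scalar times the evaluation of a fixed word. -/
theorem key {ℛ : H → Submodule F R} {β : H → H → Fˣ}
    (hreg : IsRegularGrading ℛ β) (H₀ : Finset H) (f : FreeAlgebra F ℕ) :
    ∃ C : Multiset (ℕ × H) → F, ∀ (d : Multiset (ℕ × H)) (r : ℕ × H → R), GradedSubst ℛ r →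
      (FreeAlgebra.lift F (Asub H₀ r) f).coeff d = C d • ((d.toList.map r).prod) := by
  classical
  induction f using FreeAlgebra.induction with
  | grade0 c =>
    refine ⟨fun d => if d = 0 then c else 0, fun d r hr => ?_⟩
    dsimp only
    rw [AlgHom.commutes, AddMonoidAlgebra.coe_algebraMap]
    simp only [Function.comp_apply]
    rw [AddMonoidAlgebra.coeff_single, Finsupp.single_apply]
    by_cases hd : d = 0
    · subst hd
      simp [Algebra.algebraMap_eq_smul_one]
    · simp [hd, Ne.symm hd]
  | grade1 i =>
    refine ⟨fun d => if ∃ h ∈ H₀, d = {(i, h)} then 1 else 0, fun d r hr => ?_⟩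
    dsimp only
    rw [FreeAlgebra.lift_ι_apply]
    show (∑ h ∈ H₀, AddMonoidAlgebra.single ({(i, h)} : Multiset (ℕ × H)) (r (i, h))).coeff d = _
    rw [AddMonoidAlgebra.coeff_sum, Finset.sum_apply']
    by_cases hd : ∃ h ∈ H₀, d = {(i, h)}
    · obtain ⟨h₀, hh₀, rfl⟩ := hd
      have : ∀ h ∈ H₀, (AddMonoidAlgebra.single ({(i, h)} : Multiset (ℕ × H)) (r (i, h))).coeff
          ({(i, h₀)} : Multiset (ℕ × H)) = if h = h₀ then r (i, h₀) else 0 := by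
        intro h _
        rw [AddMonoidAlgebra.coeff_single, Finsupp.single_apply]
        by_cases hh : h = h₀
        · subst hh; simp
        · rw [if_neg hh, if_neg]
          intro hc
          exact hh (by simpa [Prod.ext_iff] using Multiset.singleton_inj.mp hc)
      rw [Finset.sum_congr rfl this, Finset.sum_ite_eq' H₀ h₀ fun _ => r (i, h₀), if_pos hh₀,
        if_pos ⟨h₀, hh₀, rfl⟩]
      simp [Multiset.toList_singleton]
    · rw [if_neg hd, zero_smul]
      refine Finset.sum_eq_zero fun h hh => ?_
      rw [AddMonoidAlgebra.coeff_single, Finsupp.single_apply, if_neg]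
      intro hc
      exact hd ⟨h, hh, hc.symm⟩
  | mul x y ihx ihy =>
    obtain ⟨C₁, hC₁⟩ := ihx
    obtain ⟨C₂, hC₂⟩ := ihy
    have cc : ∀ d₁ d₂ : Multiset (ℕ × H), ∃ c : F, ∀ r : ℕ × H → R, GradedSubst ℛ r →
        ((d₁.toList ++ d₂.toList).map r).prod = c • (((d₁ + d₂).toList.map r).prod) :=
      fun d₁ d₂ => perm_scalar hreg (toList_perm_append d₁ d₂)
    choose cfun hcfun using cc
    refine ⟨fun d => ∑ p ∈ (Multiset.antidiagonal d).toFinset,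
      C₁ p.1 * C₂ p.2 * cfun p.1 p.2, fun d r hr => ?_⟩
    rw [map_mul]
    rw [AddMonoidAlgebra.mul_apply_antidiagonal _ _ d ((Multiset.antidiagonal d).toFinset)
      (fun {p} => by rw [Multiset.mem_toFinset, Multiset.mem_antidiagonal])]
    rw [Finset.sum_smul]
    refine Finset.sum_congr rfl fun p hp => ?_
    have hpd : p.1 + p.2 = d := by
      rw [Multiset.mem_toFinset, Multiset.mem_antidiagonal] at hp
      exact hp
    rw [hC₁ p.1 r hr, hC₂ p.2 r hr]
    rw [smul_mul_smul_comm]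
    have : (p.1.toList.map r).prod * (p.2.toList.map r).prod
        = cfun p.1 p.2 • ((d.toList.map r).prod) := by
      rw [← List.prod_append, ← List.map_append]
      rw [hcfun p.1 p.2 r hr, hpd]
    rw [this, smul_smul, mul_assoc]
  | add x y ihx ihy =>
    obtain ⟨C₁, hC₁⟩ := ihx
    obtain ⟨C₂, hC₂⟩ := ihy
    refine ⟨fun d => C₁ d + C₂ d, fun d r hr => ?_⟩
    rw [map_add, AddMonoidAlgebra.coeff_add, Finsupp.add_apply, hC₁ d r hr, hC₂ d r hr, add_smul]

end KeyPart

section Part3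

variable {F : Type*} [Field F] {H : Type*} [CommGroup H] [DecidableEq H]
  {R : Type*} [Ring R] [Algebra F R]

open VPaux

theorem supp_lemma {S : Set ℕ} {f : FreeAlgebra F ℕ}
    (hf : f ∈ Algebra.adjoin F (FreeAlgebra.ι F '' S)) (H₀ : Finset H) (r : ℕ × H → R) :
    ∀ m ∈ (FreeAlgebra.lift F (Asub H₀ r) f).coeff.support, ∀ v ∈ m, v.1 ∈ S := by
  classical
  induction hf using Algebra.adjoin_induction with
  | mem x hx =>
    obtain ⟨i, hi, rfl⟩ := hx
    intro m hm v hv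
    rw [FreeAlgebra.lift_ι_apply] at hm
    rw [Asub, AddMonoidAlgebra.coeff_sum] at hm
    obtain ⟨h, _, hm⟩ := Finsupp.mem_support_finset_sum m hm
    have := Finsupp.support_single_subset hm
    rw [Finset.mem_singleton] at this
    subst this
    rw [Multiset.mem_singleton] at hv
    subst hv
    exact hi
  | algebraMap c =>
    intro m hm v hv
    rw [AlgHom.commutes, AddMonoidAlgebra.coe_algebraMap] at hm
    have := Finsupp.support_single_subset hm
    rw [Finset.mem_singleton] at this
    subst this
    exact absurd hv (Multiset.notMem_zero v)
  | add x y hx hy ihx ihy =>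
    intro m hm v hv
    rw [map_add] at hm
    rcases Finset.mem_union.mp (Finsupp.support_add hm) with h | h
    · exact ihx m h v hv
    · exact ihy m h v hv
  | mul x y hx hy ihx ihy =>
    intro m hm v hv
    rw [map_mul] at hm
    obtain ⟨m₁, hm₁, m₂, hm₂, rfl⟩ := Finset.mem_add.mp (AddMonoidAlgebra.support_coeff_mul_subset _ _ hm)
    rcases Multiset.mem_add.mp hv with h | h
    · exact ihx m₁ hm₁ v h
    · exact ihy m₂ hm₂ v h

theorem mulcoeff {S T : Set ℕ} (hST : Disjoint S T)
    (x y : AddMonoidAlgebra R (Multiset (ℕ × H)))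
    (hx : ∀ m ∈ x.coeff.support, ∀ v ∈ m, v.1 ∈ S) (hy : ∀ m ∈ y.coeff.support, ∀ v ∈ m, v.1 ∈ T)
    {d₁ d₂ : Multiset (ℕ × H)} (hd₁ : ∀ v ∈ d₁, v.1 ∈ S) (hd₂ : ∀ v ∈ d₂, v.1 ∈ T) :
    (x * y).coeff (d₁ + d₂) = x.coeff d₁ * y.coeff d₂ := by
  classical
  have huniq : ∀ m₁ m₂ : Multiset (ℕ × H), (∀ v ∈ m₁, v.1 ∈ S) → (∀ v ∈ m₂, v.1 ∈ T) →
      m₁ + m₂ = d₁ + d₂ → m₁ = d₁ := by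
    intro m₁ m₂ h₁ h₂ heq
    have key : ∀ m₁' m₂' : Multiset (ℕ × H), (∀ v ∈ m₁', v.1 ∈ S) → (∀ v ∈ m₂', v.1 ∈ T) →
        (m₁' + m₂').filter (fun v => v.1 ∈ S) = m₁' := by
      intro m₁' m₂' h₁' h₂'
      rw [Multiset.filter_add]
      rw [Multiset.filter_eq_self.mpr h₁', Multiset.filter_eq_nil.mpr
        (fun v hv => Set.disjoint_right.mp hST (h₂' v hv)), add_zero]
    have := key m₁ m₂ h₁ h₂
    rw [heq, key d₁ d₂ hd₁ hd₂] at this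
    exact this.symm
  rw [AddMonoidAlgebra.mul_apply]
  have step1 : (x.coeff.sum fun a₁ b₁ => y.coeff.sum fun a₂ b₂ => if a₁ + a₂ = d₁ + d₂ then b₁ * b₂ else 0)
      = x.coeff.sum fun a₁ b₁ => if a₁ = d₁ then b₁ * y.coeff d₂ else 0 := by
    apply Finsupp.sum_congr
    intro a₁ ha₁
    by_cases h : a₁ = d₁
    · subst h
      have : (y.coeff.sum fun a₂ b₂ => if a₁ + a₂ = a₁ + d₂ then b₂ else 0) = y.coeff d₂ := by
        rw [show (fun (a₂ : Multiset (ℕ × H)) (b₂ : R) => if a₁ + a₂ = a₁ + d₂ then b₂ else 0)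
          = fun a₂ b₂ => if a₂ = d₂ then b₂ else 0 from by
            funext a₂ b₂; congr 1; simp [add_right_inj]]
        exact Finsupp.sum_ite_self_eq' y.coeff d₂
      rw [if_pos rfl]
      calc (y.coeff.sum fun a₂ b₂ => if a₁ + a₂ = a₁ + d₂ then x.coeff a₁ * b₂ else 0)
          = x.coeff a₁ * (y.coeff.sum fun a₂ b₂ => if a₁ + a₂ = a₁ + d₂ then b₂ else 0) := by
            rw [Finsupp.mul_sum]
            apply Finsupp.sum_congr
            intro a₂ _
            split <;> simp
        _ = x.coeff a₁ * y.coeff d₂ := by rw [this]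
    · rw [if_neg h]
      rw [Finsupp.sum]
      apply Finset.sum_eq_zero
      intro a₂ ha₂
      rw [if_neg]
      intro hc
      exact h (huniq a₁ a₂ (hx a₁ ha₁) (hy a₂ ha₂) hc)
  rw [step1]
  have : (x.coeff.sum fun a₁ b₁ => if a₁ = d₁ then b₁ * y.coeff d₂ else 0)
      = if d₁ ∈ x.coeff.support then x.coeff d₁ * y.coeff d₂ else 0 :=
    Finsupp.sum_ite_eq' x.coeff d₁ fun a₁ b₁ => b₁ * y.coeff d₂
  rw [this]
  by_cases h : d₁ ∈ x.coeff.support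
  · rw [if_pos h]
  · rw [if_neg h, Finsupp.notMem_support_iff.mp h, zero_mul]

theorem monprod (lam : ℕ × H → F) (m : Multiset (ℕ × H)) :
    (Multiset.toFinsupp m).prod (fun v n => lam v ^ n) = (m.map lam).prod := by
  induction m using Multiset.induction_on with
  | empty => simp
  | cons a s ih =>
    rw [← Multiset.singleton_add, map_add, Finsupp.prod_add_index (by simp)
      (fun v _ n₁ n₂ => pow_add (lam v) n₁ n₂), Multiset.toFinsupp_singleton,
      Finsupp.prod_single_index (by simp), pow_one, Multiset.map_add]
    simp [ih]

theorem vdm [Infinite F] (Q : AddMonoidAlgebra R (Multiset (ℕ × H)))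
    (hQ : ∀ lam : ℕ × H → F, (Q.coeff.sum fun m c => (m.map lam).prod • c) = 0) : Q = 0 := by
  classical
  by_contra hne
  obtain ⟨d₀, hd₀⟩ : ∃ d₀, Q.coeff d₀ ≠ 0 := by
    by_contra hc
    push_neg at hc
    exact hne (AddMonoidAlgebra.ext (Finsupp.ext hc))
  obtain ⟨φ, hφ⟩ : ∃ φ : Module.Dual F R, φ (Q.coeff d₀) ≠ 0 := by
    by_contra hc
    push_neg at hc
    exact hd₀ ((Module.forall_dual_apply_eq_zero_iff F (Q.coeff d₀)).mp hc)
  set p : MvPolynomial (ℕ × H) F :=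
    Q.coeff.sum fun m c => MvPolynomial.monomial (Multiset.toFinsupp m) (φ c) with hp
  have heval : ∀ lam : ℕ × H → F, MvPolynomial.eval lam p = 0 := by
    intro lam
    rw [hp, map_finsuppSum]
    have : (Q.coeff.sum fun m c => MvPolynomial.eval lam (MvPolynomial.monomial
        (Multiset.toFinsupp m) (φ c))) = Q.coeff.sum fun m c => φ ((m.map lam).prod • c) := by
      apply Finsupp.sum_congr
      intro m _
      rw [MvPolynomial.eval_monomial, map_smul, monprod, smul_eq_mul, mul_comm]
    rw [this, ← map_finsuppSum, hQ lam, map_zero]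
  have hp0 : p = 0 := by
    apply MvPolynomial.funext
    intro lam
    rw [heval lam, map_zero]
  have hcoeff : MvPolynomial.coeff (Multiset.toFinsupp d₀) p = φ (Q.coeff d₀) := by
    have h1 : MvPolynomial.coeff (Multiset.toFinsupp d₀) p
        = Q.coeff.sum fun m c => MvPolynomial.coeff (Multiset.toFinsupp d₀)
            (MvPolynomial.monomial (Multiset.toFinsupp m) (φ c)) := by
      rw [hp]
      have := map_finsuppSum (MvPolynomial.lcoeff F (Multiset.toFinsupp d₀)) Q.coeff
        (fun m c => MvPolynomial.monomial (Multiset.toFinsupp m) (φ c))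
      simpa [MvPolynomial.lcoeff_apply] using this
    have h2 : (Q.coeff.sum fun m c => MvPolynomial.coeff (Multiset.toFinsupp d₀)
        (MvPolynomial.monomial (Multiset.toFinsupp m) (φ c)))
        = Q.coeff.sum fun m c => if m = d₀ then φ c else 0 := by
      apply Finsupp.sum_congr
      intro m _
      rw [MvPolynomial.coeff_monomial]
      congr 1
      simp only [eq_iff_iff]
      exact ⟨fun h => Multiset.toFinsupp.injective h, fun h => by rw [h]⟩
    rw [h1, h2, Finsupp.sum_ite_eq' Q.coeff d₀ (fun _ c => φ c),
      if_pos (Finsupp.mem_support_iff.mpr hd₀)]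
  rw [hp0, MvPolynomial.coeff_zero] at hcoeff
  exact hφ hcoeff.symm

end Part3

section Part4

variable {F : Type*} [Field F] {H : Type*} [CommGroup H] [DecidableEq H]
  {R : Type*} [Ring R] [Algebra F R]

open VPaux

theorem lift_agree {U : Set ℕ} {f : FreeAlgebra F ℕ}
    (hf : f ∈ Algebra.adjoin F (FreeAlgebra.ι F '' U)) {a b : ℕ → R}
    (hab : ∀ i ∈ U, a i = b i) : FreeAlgebra.lift F a f = FreeAlgebra.lift F b f := by
  induction hf using Algebra.adjoin_induction with
  | mem x hx =>
    obtain ⟨i, hi, rfl⟩ := hx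
    rw [FreeAlgebra.lift_ι_apply, FreeAlgebra.lift_ι_apply]
    exact hab i hi
  | algebraMap c => rw [AlgHom.commutes, AlgHom.commutes]
  | add x y hx hy ihx ihy => rw [map_add, map_add, ihx, ihy]
  | mul x y hx hy ihx ihy => rw [map_mul, map_mul, ihx, ihy]

theorem exists_finset_vars (f : FreeAlgebra F ℕ) :
    ∃ I : Finset ℕ, f ∈ Algebra.adjoin F (FreeAlgebra.ι F '' ↑I) := by
  induction f using FreeAlgebra.induction with
  | grade0 c => exact ⟨∅, Subalgebra.algebraMap_mem _ c⟩
  | grade1 i => exact ⟨{i}, Algebra.subset_adjoin ⟨i, by simp, rfl⟩⟩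
  | mul x y ihx ihy =>
    obtain ⟨I₁, h₁⟩ := ihx
    obtain ⟨I₂, h₂⟩ := ihy
    refine ⟨I₁ ∪ I₂, mul_mem (Algebra.adjoin_mono (Set.image_mono ?_) h₁)
      (Algebra.adjoin_mono (Set.image_mono ?_) h₂)⟩
    · simp only [Finset.coe_union]; exact Set.subset_union_left
    · simp only [Finset.coe_union]; exact Set.subset_union_right
  | add x y ihx ihy =>
    obtain ⟨I₁, h₁⟩ := ihx
    obtain ⟨I₂, h₂⟩ := ihy
    refine ⟨I₁ ∪ I₂, add_mem (Algebra.adjoin_mono (Set.image_mono ?_) h₁)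
      (Algebra.adjoin_mono (Set.image_mono ?_) h₂)⟩
    · simp only [Finset.coe_union]; exact Set.subset_union_left
    · simp only [Finset.coe_union]; exact Set.subset_union_right

theorem word_eval (ρ : ℕ × H → R) (w : List (ℕ × H)) :
    FreeAlgebra.lift F ρ ((w.map (FreeAlgebra.ι F)).prod) = (w.map ρ).prod := by
  rw [map_list_prod, List.map_map]
  congr 1
  apply List.map_congr_left
  intro v _
  exact FreeAlgebra.lift_ι_apply _ _

end Part4

open VPaux

/-- Let `F` be an infinite field and `R` an `F`-algebra with a regular
grading by an abelian group `H` satisfying (R1).  Then `R` is verbally prime: if `f` and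
`g` are ordinary polynomials in disjoint sets of variables, neither of which is an
identity for `R`, then `f * g` is not an identity for `R`. -/
theorem verbally_prime_of_regular
    (F : Type*) [Field F] [Infinite F]
    {H : Type*} [CommGroup H] [DecidableEq H]
    {R : Type*} [Ring R] [Algebra F R]
    (ℛ : H → Submodule F R) (β : H → H → Fˣ)
    (hreg : IsRegularGrading ℛ β) (hR1 : CondR1 ℛ)
    (S T : Set ℕ) (hST : Disjoint S T)
    (f g : FreeAlgebra F ℕ)
    (hf : f ∈ Algebra.adjoin F (FreeAlgebra.ι F '' S))
    (hg : g ∈ Algebra.adjoin F (FreeAlgebra.ι F '' T))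
    (hfI : ¬ IsIdentity F R f) (hgI : ¬ IsIdentity F R g) :
    ¬ IsIdentity F R (f * g) := by
  classical
  intro hfg
  obtain ⟨a, ha⟩ := not_forall.mp hfI
  obtain ⟨b, hb⟩ := not_forall.mp hgI
  obtain ⟨If, hIf⟩ := exists_finset_vars f
  obtain ⟨Ig, hIg⟩ := exists_finset_vars g
  set a0 : ℕ → R := fun i => if i ∈ If then a i else 0 with ha0
  set b0 : ℕ → R := fun i => if i ∈ Ig then b i else 0 with hb0
  have hfa : FreeAlgebra.lift F a0 f ≠ 0 := by
    rw [← lift_agree hIf (a := a) (b := a0)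
      (fun i hi => by simp [ha0, Finset.mem_coe.mp hi])]
    exact ha
  have hgb : FreeAlgebra.lift F b0 g ≠ 0 := by
    rw [← lift_agree hIg (a := b) (b := b0)
      (fun i hi => by simp [hb0, Finset.mem_coe.mp hi])]
    exact hb
  haveI : DirectSum.Decomposition ℛ := hreg.internal.chooseDecomposition
  set ra : ℕ × H → R := fun v => ((DirectSum.decompose ℛ (a0 v.1)) v.2 : R) with hra
  set rb : ℕ × H → R := fun v => ((DirectSum.decompose ℛ (b0 v.1)) v.2 : R) with hrb
  set H₀ : Finset H := (If.biUnion fun i => (DirectSum.decompose ℛ (a0 i)).support)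
    ∪ (Ig.biUnion fun i => (DirectSum.decompose ℛ (b0 i)).support) with hH₀
  have hgr_a : GradedSubst ℛ ra := fun p => SetLike.coe_mem _
  have hgr_b : GradedSubst ℛ rb := fun p => SetLike.coe_mem _
  have hsum_a : ∀ i, ∑ h ∈ H₀, ra (i, h) = a0 i := by
    intro i
    by_cases hi : i ∈ If
    · have hsub : (DirectSum.decompose ℛ (a0 i)).support ⊆ H₀ :=
        (Finset.subset_biUnion_of_mem (fun j => (DirectSum.decompose ℛ (a0 j)).support)
          hi).trans Finset.subset_union_left
      have h1 : ∑ h ∈ (DirectSum.decompose ℛ (a0 i)).support, ra (i, h) = a0 i :=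
        DirectSum.sum_support_decompose ℛ (a0 i)
      rw [← h1]
      exact (Finset.sum_subset hsub (fun h _ hh => by
        rw [hra]
        simp only []
        rw [DFinsupp.notMem_support_iff.mp hh]
        rfl)).symm
    · have h0 : a0 i = 0 := by simp [ha0, hi]
      rw [h0]
      apply Finset.sum_eq_zero
      intro h _
      rw [hra]
      simp only []
      rw [h0, DirectSum.decompose_zero]
      rfl
  have hsum_b : ∀ i, ∑ h ∈ H₀, rb (i, h) = b0 i := by
    intro i
    by_cases hi : i ∈ Ig
    · have hsub : (DirectSum.decompose ℛ (b0 i)).support ⊆ H₀ :=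
        (Finset.subset_biUnion_of_mem (fun j => (DirectSum.decompose ℛ (b0 j)).support)
          hi).trans Finset.subset_union_right
      have h1 : ∑ h ∈ (DirectSum.decompose ℛ (b0 i)).support, rb (i, h) = b0 i :=
        DirectSum.sum_support_decompose ℛ (b0 i)
      rw [← h1]
      exact (Finset.sum_subset hsub (fun h _ hh => by
        rw [hrb]
        simp only []
        rw [DFinsupp.notMem_support_iff.mp hh]
        rfl)).symm
    · have h0 : b0 i = 0 := by simp [hb0, hi]
      rw [h0]
      apply Finset.sum_eq_zero
      intro h _
      rw [hrb]
      simp only []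
      rw [h0, DirectSum.decompose_zero]
      rfl
  obtain ⟨Cf, hCf⟩ := key hreg H₀ f
  obtain ⟨Cg, hCg⟩ := key hreg H₀ g
  have hXf : FreeAlgebra.lift F (Asub H₀ ra) f ≠ 0 := by
    intro h0
    apply hfa
    rw [← tot_lift H₀ ra a0 hsum_a f, h0, map_zero]
  have hXg : FreeAlgebra.lift F (Asub H₀ rb) g ≠ 0 := by
    intro h0
    apply hgb
    rw [← tot_lift H₀ rb b0 hsum_b g, h0, map_zero]
  obtain ⟨d₁, hd₁⟩ : ∃ d, (FreeAlgebra.lift F (Asub H₀ ra) f).coeff d ≠ 0 := by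
    by_contra hc
    push_neg at hc
    exact hXf (AddMonoidAlgebra.ext (Finsupp.ext hc))
  obtain ⟨d₂, hd₂⟩ : ∃ d, (FreeAlgebra.lift F (Asub H₀ rb) g).coeff d ≠ 0 := by
    by_contra hc
    push_neg at hc
    exact hXg (AddMonoidAlgebra.ext (Finsupp.ext hc))
  have hCf1 : Cf d₁ ≠ 0 := fun h0 => hd₁ (by rw [hCf d₁ ra hgr_a, h0, zero_smul])
  have hWf : ((d₁.toList.map ra).prod) ≠ 0 :=
    fun h0 => hd₁ (by rw [hCf d₁ ra hgr_a, h0, smul_zero])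
  have hCg1 : Cg d₂ ≠ 0 := fun h0 => hd₂ (by rw [hCg d₂ rb hgr_b, h0, zero_smul])
  have hWg : ((d₂.toList.map rb).prod) ≠ 0 :=
    fun h0 => hd₂ (by rw [hCg d₂ rb hgr_b, h0, smul_zero])
  have hS1 : ∀ v ∈ d₁, v.1 ∈ S := supp_lemma hf H₀ ra d₁ (Finsupp.mem_support_iff.mpr hd₁)
  have hT2 : ∀ v ∈ d₂, v.1 ∈ T := supp_lemma hg H₀ rb d₂ (Finsupp.mem_support_iff.mpr hd₂)
  have hdisj : d₁.toList.Disjoint d₂.toList := by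
    intro v hv1 hv2
    exact Set.disjoint_left.mp hST (hS1 v (by rwa [← Multiset.mem_toList]))
      (hT2 v (by rwa [← Multiset.mem_toList]))
  have hw1 : ¬ IsGradedIdentity ℛ ((d₁.toList.map (FreeAlgebra.ι F)).prod) := by
    intro hid
    exact hWf ((word_eval ra d₁.toList).symm.trans (hid ra hgr_a))
  have hw2 : ¬ IsGradedIdentity ℛ ((d₂.toList.map (FreeAlgebra.ι F)).prod) := by
    intro hid
    exact hWg ((word_eval rb d₂.toList).symm.trans (hid rb hgr_b))
  have hnid := hR1 d₁.toList d₂.toList hdisj hw1 hw2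
  rw [IsGradedIdentity] at hnid
  push_neg at hnid
  obtain ⟨ρ, hρg, hρ⟩ := hnid
  rw [map_mul, word_eval, word_eval] at hρ
  set Q := FreeAlgebra.lift F (Asub H₀ ρ) (f * g) with hQdef
  have hQ0 : Q = 0 := by
    apply vdm (F := F)
    intro lam
    have h3 := hfg (fun i => ∑ h ∈ H₀, lam (i, h) • ρ (i, h))
    have h4 : Tot F R (Multiset (ℕ × H)) (Scal (F := F) lam Q) = 0 := by
      rw [hQdef, scal_lift, tot_lift H₀ _ _ (fun i => rfl) (f * g)]
      exact h3
    rw [← h4]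
    conv_rhs => rw [← AddMonoidAlgebra.sum_coeff_single Q]
    rw [map_finsuppSum, map_finsuppSum]
    apply Finsupp.sum_congr
    intro m _
    rw [Scal_single, Tot_single]
  have hcoeff : Q.coeff (d₁ + d₂) = 0 := by rw [hQ0]; rfl
  apply absurd hcoeff
  rw [hQdef, map_mul]
  rw [mulcoeff hST _ _ (supp_lemma hf H₀ ρ) (supp_lemma hg H₀ ρ) hS1 hT2]
  rw [hCf d₁ ρ hρg, hCg d₂ ρ hρg, smul_mul_smul_comm]
  intro hz
  apply hρ
  have h5 := congrArg (fun z => (Cf d₁ * Cg d₂)⁻¹ • z) hz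
  simp only [smul_smul, inv_mul_cancel₀ (mul_ne_zero hCf1 hCg1), one_smul, smul_zero] at h5
  exact h5
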